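/- For every k ≥ 1, the set H_k^+ of permutations whose up-blocks all have length less than k is a well partial order with respect to containment ≺; the same holds for H_k^-. -/

import Mathlib

/-- A finite permutation: a length `n` together with a permutation of `{1,…,n}`
(modelled as `Fin n`). -/
def PermSeq : Type := Σ n : ℕ, Equiv.Perm (Fin n)

/-- `PermContains π ρ` : the permutation `π` is contained in `ρ` (written `π ≺ ρ`),
i.e. `ρ`, viewed as a sequence, has a subsequence order-isomorphic to `π`. -/
def PermContains {m n : ℕ} (π : Equiv.Perm (Fin m)) (ρ : Equiv.Perm (Fin n)) : Prop :=
  ∃ f : Fin m → Fin n, StrictMono f ∧ ∀ i j : Fin m, π i < π j ↔ ρ (f i) < ρ (f j)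

/-- Containment as a relation on `PermSeq`. -/
def PermLE (σ τ : PermSeq) : Prop := PermContains σ.2 τ.2

/-- A closed permutation class: downward closed under containment. -/
def IsCPC (X : Set PermSeq) : Prop := ∀ σ ∈ X, ∀ π : PermSeq, PermLE π σ → π ∈ X

/-- `countIn X n = |X ∩ S_n|`. -/
noncomputable def countIn (X : Set PermSeq) (n : ℕ) : ℕ := {π ∈ X | π.1 = n}.ncard

/-- The direct sum `σ ⊕ τ` of permutations: `(σ⊕τ)(i) = σ(i)` for `i` in the first block
and `(σ⊕τ)(m+i) = m + τ(i)` on the second block. -/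
def permOplus {m n : ℕ} (σ : Equiv.Perm (Fin m)) (τ : Equiv.Perm (Fin n)) :
    Equiv.Perm (Fin (m + n)) :=
  finSumFinEquiv.symm.trans ((Equiv.sumCongr σ τ).trans finSumFinEquiv)

/-- The skew sum `σ ⊖ τ` of permutations: `(σ⊖τ)(i) = n + σ(i)` for `i` in the first block
and `(σ⊖τ)(m+i) = τ(i)` on the second block. -/
def permOminus {m n : ℕ} (σ : Equiv.Perm (Fin m)) (τ : Equiv.Perm (Fin n)) :
    Equiv.Perm (Fin (m + n)) :=
  finSumFinEquiv.symm.trans ((Equiv.sumCongr σ τ).trans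
    ((Equiv.sumComm (Fin m) (Fin n)).trans (finSumFinEquiv.trans (finCongr (Nat.add_comm n m)))))

/-- Direct sum on `PermSeq`. -/
def PermSeq.oplus (σ τ : PermSeq) : PermSeq := ⟨σ.1 + τ.1, permOplus σ.2 τ.2⟩

/-- Skew sum on `PermSeq`. -/
def PermSeq.ominus (σ τ : PermSeq) : PermSeq := ⟨σ.1 + τ.1, permOminus σ.2 τ.2⟩

/-- A permutation is up-indecomposable if it is not the direct sum of two nonempty
permutations. -/
def UpIndec (π : PermSeq) : Prop :=
  ¬ ∃ σ τ : PermSeq, 1 ≤ σ.1 ∧ 1 ≤ τ.1 ∧ π = PermSeq.oplus σ τ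

/-- A permutation is down-indecomposable if it is not the skew sum of two nonempty
permutations. -/
def DownIndec (π : PermSeq) : Prop :=
  ¬ ∃ σ τ : PermSeq, 1 ≤ σ.1 ∧ 1 ≤ τ.1 ∧ π = PermSeq.ominus σ τ

/-- Direct sum of a list of permutations. -/
def listOplus (l : List PermSeq) : PermSeq := l.foldr PermSeq.oplus ⟨0, 1⟩

/-- Skew sum of a list of permutations. -/
def listOminus (l : List PermSeq) : PermSeq := l.foldr PermSeq.ominus ⟨0, 1⟩

/-- `π ∈ H_k^+` : all up-blocks of the (unique) up-decomposition of `π` into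
up-indecomposable permutations have length `< k`. -/
def HUp (k : ℕ) (π : PermSeq) : Prop :=
  ∃ l : List PermSeq, (∀ σ ∈ l, UpIndec σ ∧ σ.1 < k) ∧ π = listOplus l

/-- `π ∈ H_k^-` : all down-blocks of the (unique) down-decomposition of `π` into
down-indecomposable permutations have length `< k`. -/
def HDown (k : ℕ) (π : PermSeq) : Prop :=
  ∃ l : List PermSeq, (∀ σ ∈ l, DownIndec σ ∧ σ.1 < k) ∧ π = listOminus l

/-- `(s, ≺)` is a well partial order: it has no infinite strictly descending chains and
no infinite antichains. -/
def IsWpoOn (s : Set PermSeq) : Prop :=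
  (¬ ∃ f : ℕ → PermSeq, (∀ i, f i ∈ s) ∧
      ∀ i, PermLE (f (i + 1)) (f i) ∧ f (i + 1) ≠ f i) ∧
  (¬ ∃ f : ℕ → PermSeq, (∀ i, f i ∈ s) ∧ ∀ i j, i ≠ j → ¬ PermLE (f i) (f j))

section Aux

lemma permContains_refl {m : ℕ} (π : Equiv.Perm (Fin m)) : PermContains π π :=
  ⟨id, strictMono_id, fun _ _ => Iff.rfl⟩

lemma permContains_trans {m n p : ℕ} {π : Equiv.Perm (Fin m)} {ρ : Equiv.Perm (Fin n)}
    {χ : Equiv.Perm (Fin p)} (h1 : PermContains π ρ) (h2 : PermContains ρ χ) :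
    PermContains π χ := by
  obtain ⟨f, hf, hfo⟩ := h1; obtain ⟨g, hg, hgo⟩ := h2
  exact ⟨g ∘ f, hg.comp hf, fun i j => (hfo i j).trans (hgo (f i) (f j))⟩

instance : IsRefl PermSeq PermLE := ⟨fun σ => permContains_refl σ.2⟩
instance : IsTrans PermSeq PermLE := ⟨fun _ _ _ => permContains_trans⟩
instance : IsPreorder PermSeq PermLE where
  refl σ := permContains_refl σ.2

lemma permLE_size {σ τ : PermSeq} (h : PermLE σ τ) : σ.1 ≤ τ.1 := by
  obtain ⟨f, hf, -⟩ := h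
  simpa using Fintype.card_le_of_injective f hf.injective

lemma strictMono_fin_id {m : ℕ} {f : Fin m → Fin m} (hf : StrictMono f) : ∀ i, f i = i := by
  have hbij : Function.Bijective f := Finite.injective_iff_bijective.1 hf.injective
  let e := StrictMono.orderIsoOfSurjective f hf hbij.2
  have he : e = OrderIso.refl (Fin m) := Subsingleton.elim _ _
  intro i
  have := congrArg (fun g : Fin m ≃o Fin m => g i) he
  simpa [e, StrictMono.coe_orderIsoOfSurjective] using this

lemma permContains_eq {m : ℕ} {π ρ : Equiv.Perm (Fin m)} (h : PermContains π ρ) : π = ρ := by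
  obtain ⟨f, hf, hfo⟩ := h
  have hid : ∀ i, f i = i := strictMono_fin_id hf
  have hfo' : ∀ i j, π i < π j ↔ ρ i < ρ j := by
    intro i j
    have := hfo i j
    rwa [hid, hid] at this
  have hsm : StrictMono fun x => ρ (π.symm x) := by
    intro a b hab
    have h2 : π (π.symm a) < π (π.symm b) := by simpa using hab
    exact (hfo' _ _).1 h2
  have hid2 := strictMono_fin_id hsm
  ext y
  have := hid2 (π y)
  simp only [Equiv.symm_apply_apply] at this
  exact congrArg Fin.val this.symm

lemma permLE_eq_of_size {σ τ : PermSeq} (h : PermLE σ τ) (hs : σ.1 = τ.1) : σ = τ := by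
  obtain ⟨m, π⟩ := σ; obtain ⟨n, ρ⟩ := τ
  obtain rfl : m = n := hs
  exact congrArg (Sigma.mk m) (permContains_eq h)

lemma permOplus_castAdd {m n : ℕ} (σ : Equiv.Perm (Fin m)) (τ : Equiv.Perm (Fin n)) (i : Fin m) :
    permOplus σ τ (Fin.castAdd n i) = Fin.castAdd n (σ i) := by
  simp [permOplus]

lemma permOplus_natAdd {m n : ℕ} (σ : Equiv.Perm (Fin m)) (τ : Equiv.Perm (Fin n)) (i : Fin n) :
    permOplus σ τ (Fin.natAdd m i) = Fin.natAdd m (τ i) := by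
  simp [permOplus]

lemma permOminus_castAdd_val {m n : ℕ} (σ : Equiv.Perm (Fin m)) (τ : Equiv.Perm (Fin n))
    (i : Fin m) : (permOminus σ τ (Fin.castAdd n i)).val = n + (σ i).val := by
  simp [permOminus, Nat.add_comm]

lemma permOminus_natAdd_val {m n : ℕ} (σ : Equiv.Perm (Fin m)) (τ : Equiv.Perm (Fin n))
    (i : Fin n) : (permOminus σ τ (Fin.natAdd m i)).val = (τ i).val := by
  simp [permOminus]

lemma strictMono_addCases_embed {m n m' n' : ℕ} {f : Fin m → Fin m'} {g : Fin n → Fin n'}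
    (hf : StrictMono f) (hg : StrictMono g) :
    StrictMono (fun x : Fin (m + n) =>
      Fin.addCases (motive := fun _ => Fin (m' + n'))
        (fun i => Fin.castAdd n' (f i)) (fun i => Fin.natAdd m' (g i)) x) := by
  intro a b hab
  induction a using Fin.addCases with
  | left i =>
    induction b using Fin.addCases with
    | left j =>
      simp only [Fin.addCases_left]
      have hij : i < j := by
        rw [Fin.lt_def] at hab ⊢
        simpa using hab
      have := hf hij
      rw [Fin.lt_def] at this ⊢
      simpa using this
    | right j =>
      simp only [Fin.addCases_left, Fin.addCases_right]
      rw [Fin.lt_def]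
      have := (f i).isLt
      simp only [Fin.coe_castAdd, Fin.coe_natAdd]
      omega
  | right i =>
    induction b using Fin.addCases with
    | left j =>
      exfalso
      rw [Fin.lt_def] at hab
      have := j.isLt
      simp only [Fin.coe_castAdd, Fin.coe_natAdd] at hab
      omega
    | right j =>
      simp only [Fin.addCases_right]
      have hij : i < j := by
        rw [Fin.lt_def] at hab ⊢
        simp only [Fin.coe_natAdd] at hab
        omega
      have := hg hij
      rw [Fin.lt_def] at this ⊢
      simpa using this

lemma permContains_oplus {m n m' n' : ℕ} {σ : Equiv.Perm (Fin m)} {τ : Equiv.Perm (Fin n)}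
    {σ' : Equiv.Perm (Fin m')} {τ' : Equiv.Perm (Fin n')}
    (h1 : PermContains σ σ') (h2 : PermContains τ τ') :
    PermContains (permOplus σ τ) (permOplus σ' τ') := by
  obtain ⟨f, hf, hfo⟩ := h1; obtain ⟨g, hg, hgo⟩ := h2
  refine ⟨fun x => Fin.addCases (motive := fun _ => Fin (m' + n'))
      (fun i => Fin.castAdd n' (f i)) (fun i => Fin.natAdd m' (g i)) x,
    strictMono_addCases_embed hf hg, ?_⟩
  intro i j
  induction i using Fin.addCases with
  | left i =>
    induction j using Fin.addCases with
    | left j =>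
      simp only [Fin.addCases_left, permOplus_castAdd]
      have := hfo i j
      rw [Fin.lt_def, Fin.lt_def] at this
      rw [Fin.lt_def, Fin.lt_def]
      simpa using this
    | right j =>
      simp only [Fin.addCases_left, Fin.addCases_right, permOplus_castAdd, permOplus_natAdd]
      rw [Fin.lt_def, Fin.lt_def]
      have h1 := (σ i).isLt
      have h2 := (σ' (f i)).isLt
      simp only [Fin.coe_castAdd, Fin.coe_natAdd]
      omega
  | right i =>
    induction j using Fin.addCases with
    | left j =>
      simp only [Fin.addCases_left, Fin.addCases_right, permOplus_castAdd, permOplus_natAdd]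
      rw [Fin.lt_def, Fin.lt_def]
      have h1 := (σ j).isLt
      have h2 := (σ' (f j)).isLt
      simp only [Fin.coe_castAdd, Fin.coe_natAdd]
      omega
    | right j =>
      simp only [Fin.addCases_right, permOplus_natAdd]
      have := hgo i j
      rw [Fin.lt_def, Fin.lt_def] at this
      rw [Fin.lt_def, Fin.lt_def]
      simp only [Fin.coe_natAdd]
      omega

lemma permContains_oplus_right {n m' n' : ℕ} {τ : Equiv.Perm (Fin n)}
    (σ' : Equiv.Perm (Fin m')) {τ' : Equiv.Perm (Fin n')}
    (h : PermContains τ τ') : PermContains τ (permOplus σ' τ') := by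
  obtain ⟨g, hg, hgo⟩ := h
  refine ⟨fun i => Fin.natAdd m' (g i), ?_, ?_⟩
  · intro a b hab
    have := hg hab
    rw [Fin.lt_def] at this ⊢
    simp only [Fin.coe_natAdd]
    omega
  · intro i j
    simp only [permOplus_natAdd]
    have := hgo i j
    rw [Fin.lt_def, Fin.lt_def] at this
    rw [Fin.lt_def, Fin.lt_def]
    simp only [Fin.coe_natAdd]
    omega

lemma permContains_ominus {m n m' n' : ℕ} {σ : Equiv.Perm (Fin m)} {τ : Equiv.Perm (Fin n)}
    {σ' : Equiv.Perm (Fin m')} {τ' : Equiv.Perm (Fin n')}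
    (h1 : PermContains σ σ') (h2 : PermContains τ τ') :
    PermContains (permOminus σ τ) (permOminus σ' τ') := by
  obtain ⟨f, hf, hfo⟩ := h1; obtain ⟨g, hg, hgo⟩ := h2
  refine ⟨fun x => Fin.addCases (motive := fun _ => Fin (m' + n'))
      (fun i => Fin.castAdd n' (f i)) (fun i => Fin.natAdd m' (g i)) x,
    strictMono_addCases_embed hf hg, ?_⟩
  intro i j
  induction i using Fin.addCases with
  | left i =>
    induction j using Fin.addCases with
    | left j =>
      simp only [Fin.addCases_left]
      rw [Fin.lt_def, Fin.lt_def, permOminus_castAdd_val, permOminus_castAdd_val,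
        permOminus_castAdd_val, permOminus_castAdd_val]
      have := hfo i j
      rw [Fin.lt_def, Fin.lt_def] at this
      omega
    | right j =>
      simp only [Fin.addCases_left, Fin.addCases_right]
      rw [Fin.lt_def, Fin.lt_def, permOminus_castAdd_val, permOminus_natAdd_val,
        permOminus_castAdd_val, permOminus_natAdd_val]
      have h1 := (τ j).isLt
      have h2 := (τ' (g j)).isLt
      omega
  | right i =>
    induction j using Fin.addCases with
    | left j =>
      simp only [Fin.addCases_left, Fin.addCases_right]
      rw [Fin.lt_def, Fin.lt_def, permOminus_castAdd_val, permOminus_natAdd_val,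
        permOminus_castAdd_val, permOminus_natAdd_val]
      have h1 := (τ i).isLt
      have h2 := (τ' (g i)).isLt
      omega
    | right j =>
      simp only [Fin.addCases_right]
      rw [Fin.lt_def, Fin.lt_def, permOminus_natAdd_val, permOminus_natAdd_val,
        permOminus_natAdd_val, permOminus_natAdd_val]
      have := hgo i j
      rw [Fin.lt_def, Fin.lt_def] at this
      omega

lemma permContains_ominus_right {n m' n' : ℕ} {τ : Equiv.Perm (Fin n)}
    (σ' : Equiv.Perm (Fin m')) {τ' : Equiv.Perm (Fin n')}
    (h : PermContains τ τ') : PermContains τ (permOminus σ' τ') := by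
  obtain ⟨g, hg, hgo⟩ := h
  refine ⟨fun i => Fin.natAdd m' (g i), ?_, ?_⟩
  · intro a b hab
    have := hg hab
    rw [Fin.lt_def] at this ⊢
    simp only [Fin.coe_natAdd]
    omega
  · intro i j
    rw [Fin.lt_def (a := permOminus σ' τ' _), permOminus_natAdd_val, permOminus_natAdd_val]
    have := hgo i j
    rw [Fin.lt_def, Fin.lt_def] at this
    rw [Fin.lt_def]
    omega

lemma permLE_nil (τ : PermSeq) : PermLE ⟨0, 1⟩ τ :=
  ⟨Fin.elim0, fun a => a.elim0, fun i => i.elim0⟩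

lemma sublistForall₂_oplus {l₁ l₂ : List PermSeq} (h : List.SublistForall₂ PermLE l₁ l₂) :
    PermLE (listOplus l₁) (listOplus l₂) := by
  induction h with
  | nil => exact permLE_nil _
  | cons h₁ _ ih => exact permContains_oplus h₁ ih
  | cons_right _ ih => exact permContains_oplus_right _ ih

lemma sublistForall₂_ominus {l₁ l₂ : List PermSeq} (h : List.SublistForall₂ PermLE l₁ l₂) :
    PermLE (listOminus l₁) (listOminus l₂) := by
  induction h with
  | nil => exact permLE_nil _
  | cons h₁ _ ih => exact permContains_ominus h₁ ih
  | cons_right _ ih => exact permContains_ominus_right _ ih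

lemma finite_small (k : ℕ) : {σ : PermSeq | σ.1 < k}.Finite := by
  rw [← Set.finite_coe_iff]
  refine Finite.of_injective
    (fun σ : {σ : PermSeq // σ.1 < k} =>
      (⟨⟨σ.1.1, σ.2⟩, σ.1.2⟩ : Σ n : Fin k, Equiv.Perm (Fin n))) ?_
  rintro ⟨⟨m, π⟩, hm⟩ ⟨⟨n, ρ⟩, hn⟩ h
  simp only [Sigma.mk.inj_iff, Fin.mk.injEq] at h
  obtain ⟨rfl, h2⟩ := h
  simp only [heq_eq_eq] at h2
  subst h2
  rfl

lemma no_descending (s : Set PermSeq) :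
    ¬ ∃ f : ℕ → PermSeq, (∀ i, f i ∈ s) ∧
      ∀ i, PermLE (f (i + 1)) (f i) ∧ f (i + 1) ≠ f i := by
  rintro ⟨f, -, hdec⟩
  have hlt : ∀ i, (f (i + 1)).1 < (f i).1 := by
    intro i
    rcases lt_or_eq_of_le (permLE_size (hdec i).1) with h | h
    · exact h
    · exact absurd (permLE_eq_of_size (hdec i).1 h) (hdec i).2
  have key : ∀ i, (f i).1 + i ≤ (f 0).1 := by
    intro i
    induction i with
    | zero => simp
    | succ n ih => have := hlt n; omega
  have := key ((f 0).1 + 1)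
  omega

end Aux

/-- For every `k ≥ 1`, the set `H_k^+` of permutations all of whose up-blocks have length
less than `k` is a well partial order under containment; the same holds for `H_k^-`. -/
theorem HUp_HDown_wpo (k : ℕ) (hk : 1 ≤ k) :
    IsWpoOn {π : PermSeq | HUp k π} ∧ IsWpoOn {π : PermSeq | HDown k π} := by
  have hpwo := Set.PartiallyWellOrderedOn.partiallyWellOrderedOn_sublistForall₂ PermLE
    ((finite_small k).partiallyWellOrderedOn)
  constructor
  · refine ⟨no_descending _, ?_⟩
    rintro ⟨f, hmem, hanti⟩
    choose l hl hfl using fun i => hmem i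
    obtain ⟨a, b, hab, hsub⟩ := hpwo.exists_lt (f := l) (fun i x hx => (hl i x hx).2)
    refine hanti a b hab.ne ?_
    rw [hfl a, hfl b]
    exact sublistForall₂_oplus hsub
  · refine ⟨no_descending _, ?_⟩
    rintro ⟨f, hmem, hanti⟩
    choose l hl hfl using fun i => hmem i
    obtain ⟨a, b, hab, hsub⟩ := hpwo.exists_lt (f := l) (fun i x hx => (hl i x hx).2)
    refine hanti a b hab.ne ?_
    rw [hfl a, hfl b]
    exact sublistForall₂_ominus hsub
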